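/- The function x ↦ (1/2)‖Ax − y‖² + μ·Ψ_B(Lx) is convex on X whenever A*A − μ·L*B*BL is positive semidefinite, where Ψ_B(z) = Ψ(z) − inf_v [Ψ(v) + (1/2)‖B(z−v)‖²]. (Univariate instance of the overall convexity condition.) -/
import Mathlib


open RealInnerProductSpace

private lemma comb_sub' {E : Type*} [AddCommGroup E] [Module ℝ E] {a b : ℝ} (hab : a + b = 1)
    (u v c : E) : a • (u - c) + b • (v - c) = a • u + b • v - c := by
  have h : (c : E) = a • c + b • c := by rw [← add_smul, hab, one_smul]
  rw [smul_sub, smul_sub]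
  conv_rhs => rw [h]
  abel

private lemma expand_sq' {E : Type*} [NormedAddCommGroup E] [InnerProductSpace ℝ E]
    (u v : E) (a b : ℝ) :
    ‖a • u + b • v‖ ^ 2 = a ^ 2 * ‖u‖ ^ 2 + 2 * (a * b) * ⟪u, v⟫ + b ^ 2 * ‖v‖ ^ 2 := by
  rw [← real_inner_self_eq_norm_sq, ← real_inner_self_eq_norm_sq, ← real_inner_self_eq_norm_sq]
  simp only [inner_add_left, inner_add_right, real_inner_smul_left, real_inner_smul_right,
    real_inner_comm v u]
  ring

private lemma quad_ineq' (a b μ p1 p2 pi s1 s2 si : ℝ) (ha : 0 ≤ a) (hb : 0 ≤ b)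
    (hab : a + b = 1) (h : μ * (s1 - 2 * si + s2) ≤ p1 - 2 * pi + p2) :
    (a ^ 2 * p1 + 2 * (a * b) * pi + b ^ 2 * p2) / 2
      - μ * (a ^ 2 * s1 + 2 * (a * b) * si + b ^ 2 * s2) / 2
      ≤ a * (p1 / 2 - μ * s1 / 2) + b * (p2 / 2 - μ * s2 / 2) := by
  have hb' : b = 1 - a := by linarith
  subst hb'
  nlinarith [mul_le_mul_of_nonneg_left h (mul_nonneg ha hb)]


/-- Overall convexity (univariate instance): if A*A − μ L*B*B L ⪰ 0 then
x ↦ ½‖Ax − y‖² + μ Ψ_B(Lx) is convex. -/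
theorem stmt_3
    {X Y Z Z' : Type*}
    [NormedAddCommGroup X] [InnerProductSpace ℝ X] [FiniteDimensional ℝ X]
    [NormedAddCommGroup Y] [InnerProductSpace ℝ Y] [FiniteDimensional ℝ Y]
    [NormedAddCommGroup Z] [InnerProductSpace ℝ Z] [FiniteDimensional ℝ Z]
    [NormedAddCommGroup Z'] [InnerProductSpace ℝ Z'] [FiniteDimensional ℝ Z']
    (A : X →ₗ[ℝ] Y) (L : X →ₗ[ℝ] Z) (B : Z →ₗ[ℝ] Z') (y : Y) (μ : ℝ) (hμ : 0 < μ)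
    (Ψ : Z → ℝ) (hconv : ConvexOn ℝ Set.univ Ψ) (hcont : Continuous Ψ)
    (hcoer : ∀ c : ℝ, ∃ r : ℝ, ∀ v : Z, r ≤ ‖v‖ → c ≤ Ψ v)
    (hpsd : ∀ x : X, 0 ≤ ⟪(LinearMap.adjoint A ∘ₗ A - μ • (LinearMap.adjoint L ∘ₗ LinearMap.adjoint B ∘ₗ B ∘ₗ L)) x, x⟫) :
    ConvexOn ℝ Set.univ (fun x : X =>
      ‖A x - y‖ ^ 2 / 2 + μ * (Ψ (L x) - ⨅ v : Z, (Ψ v + ‖B (L x - v)‖ ^ 2 / 2))) := by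
  -- Ψ is bounded below
  obtain ⟨m, hm⟩ : ∃ m : ℝ, ∀ v : Z, m ≤ Ψ v := by
    obtain ⟨r, hr⟩ := hcoer 0
    obtain ⟨v0, hv0mem, hv0⟩ :=
      (isCompact_closedBall (0 : Z) (max r 0)).exists_isMinOn
        ⟨0, by simp⟩ hcont.continuousOn
    refine ⟨min 0 (Ψ v0), fun v => ?_⟩
    rcases le_or_gt ‖v‖ (max r 0) with h | h
    · exact (min_le_right _ _).trans
        (hv0 (by simpa [Metric.mem_closedBall, dist_zero_right] using h))
    · exact (min_le_left _ _).trans (hr v ((le_max_left r 0).trans h.le))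
  have hbdd : ∀ u : X, BddBelow (Set.range fun v : Z => Ψ v + ‖B (L u - v)‖ ^ 2 / 2) := by
    intro u
    refine ⟨m, ?_⟩
    rintro _ ⟨v, rfl⟩
    have h1 := hm v
    have h2 : (0:ℝ) ≤ ‖B (L u - v)‖ ^ 2 / 2 := by positivity
    linarith
  have hpsd' : ∀ u : X, μ * ‖B (L u)‖ ^ 2 ≤ ‖A u‖ ^ 2 := by
    intro u
    have h := hpsd u
    simp only [LinearMap.sub_apply, LinearMap.smul_apply, LinearMap.comp_apply,
      inner_sub_left, real_inner_smul_left, LinearMap.adjoint_inner_left] at h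
    rw [real_inner_self_eq_norm_sq, real_inner_self_eq_norm_sq] at h
    linarith
  refine ⟨convex_univ, ?_⟩
  intro x _ z _ a b ha hb hab
  simp only [smul_eq_mul]
  set w := a • x + b • z with hw
  set Iw : ℝ := ⨅ v : Z, (Ψ v + ‖B (L w - v)‖ ^ 2 / 2) with hIwdef
  set Ix : ℝ := ⨅ v : Z, (Ψ v + ‖B (L x - v)‖ ^ 2 / 2) with hIxdef
  set Iz : ℝ := ⨅ v : Z, (Ψ v + ‖B (L z - v)‖ ^ 2 / 2) with hIzdef
  set R : ℝ := a * (‖A x - y‖ ^ 2 / 2 + μ * (Ψ (L x) - Ix))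
      + b * (‖A z - y‖ ^ 2 / 2 + μ * (Ψ (L z) - Iz)) with hR
  show ‖A w - y‖ ^ 2 / 2 + μ * (Ψ (L w) - Iw) ≤ R
  have hLw : L w = a • L x + b • L z := by rw [hw]; simp
  have hconvΨ : Ψ (L w) ≤ a * Ψ (L x) + b * Ψ (L z) := by
    rw [hLw]
    simpa using hconv.2 (Set.mem_univ (L x)) (Set.mem_univ (L z)) ha hb hab
  have hAw : A w - y = a • (A x - y) + b • (A z - y) := by
    rw [comb_sub' hab, hw]
    simp
  have key : ∀ v : Z,
      ‖A w - y‖ ^ 2 / 2 + μ * Ψ (L w) - μ * (Ψ v + ‖B (L w - v)‖ ^ 2 / 2) ≤ R := by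
    intro v
    have hBw : B (L w - v) = a • B (L x - v) + b • B (L z - v) := by
      rw [← map_smul, ← map_smul, ← map_add, comb_sub' hab, hLw]
    -- expansions
    have eA := expand_sq' (A x - y) (A z - y) a b
    have eB := expand_sq' (B (L x - v)) (B (L z - v)) a b
    have eAd : ‖A (x - z)‖ ^ 2
        = ‖A x - y‖ ^ 2 - 2 * ⟪A x - y, A z - y⟫ + ‖A z - y‖ ^ 2 := by
      rw [show A (x - z) = (A x - y) - (A z - y) from by rw [map_sub]; abel,
        norm_sub_sq_real]
    have eBd : ‖B (L (x - z))‖ ^ 2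
        = ‖B (L x - v)‖ ^ 2 - 2 * ⟪B (L x - v), B (L z - v)⟫ + ‖B (L z - v)‖ ^ 2 := by
      rw [show B (L (x - z)) = B (L x - v) - B (L z - v) from by
          rw [← map_sub]; congr 1; rw [map_sub]; abel,
        norm_sub_sq_real]
    have hq := hpsd' (x - z)
    rw [eAd] at hq
    rw [eBd] at hq
    have hquad := quad_ineq' a b μ (‖A x - y‖ ^ 2) (‖A z - y‖ ^ 2)
      (⟪A x - y, A z - y⟫) (‖B (L x - v)‖ ^ 2) (‖B (L z - v)‖ ^ 2)
      (⟪B (L x - v), B (L z - v)⟫) ha hb hab (by linarith)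
    have hIx : Ix ≤ Ψ v + ‖B (L x - v)‖ ^ 2 / 2 := ciInf_le (hbdd x) v
    have hIz : Iz ≤ Ψ v + ‖B (L z - v)‖ ^ 2 / 2 := ciInf_le (hbdd z) v
    have hIxa : a * (μ * Ix) ≤ a * (μ * (Ψ v + ‖B (L x - v)‖ ^ 2 / 2)) :=
      mul_le_mul_of_nonneg_left (mul_le_mul_of_nonneg_left hIx hμ.le) ha
    have hIzb : b * (μ * Iz) ≤ b * (μ * (Ψ v + ‖B (L z - v)‖ ^ 2 / 2)) :=
      mul_le_mul_of_nonneg_left (mul_le_mul_of_nonneg_left hIz hμ.le) hb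
    have hΨ' : μ * Ψ (L w) ≤ μ * (a * Ψ (L x) + b * Ψ (L z)) :=
      mul_le_mul_of_nonneg_left hconvΨ hμ.le
    rw [hR, hAw, eA, hBw, eB]
    have h3 : a * (μ * Ψ v) + b * (μ * Ψ v) = μ * Ψ v := by
      rw [← add_mul, hab, one_mul]
    linarith [hquad, hIxa, hIzb, hΨ', h3]
  have h1 : (‖A w - y‖ ^ 2 / 2 + μ * Ψ (L w) - R) / μ ≤ Iw := by
    apply le_ciInf
    intro v
    rw [div_le_iff₀ hμ]
    linarith [key v]
  have h2 : ‖A w - y‖ ^ 2 / 2 + μ * Ψ (L w) - R ≤ μ * Iw := by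
    have := mul_le_mul_of_nonneg_left h1 hμ.le
    rwa [mul_div_cancel₀ _ (ne_of_gt hμ)] at this
  rw [mul_sub]
  linarith [h2]
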